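/- Let n ≥ 1 and let v : Fin n → ℝ². Then the frontier of the convex hull conv{v_0, …, v_{n−1}} is contained in the union over all pairs (i, j) of the segments [v_i, v_j]. -/

import Mathlib

open Finset Module

/-- A point `s • d + p` with `a ≤ s ≤ b` lies on the segment between `a • d + p`
and `b • d + p`. -/
private lemma seg_aux {E : Type*} [AddCommGroup E] [Module ℝ E] (p d : E) {a b s : ℝ}
    (has : a ≤ s) (hsb : s ≤ b) : s • d + p ∈ segment ℝ (a • d + p) (b • d + p) := by
  rcases eq_or_lt_of_le (has.trans hsb) with h | h
  · have hs : s = a := le_antisymm (h ▸ hsb) has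
    subst hs
    exact left_mem_segment ℝ _ _
  · set θ : ℝ := (s - a) / (b - a) with hθ
    have hba : 0 < b - a := sub_pos.2 h
    have hθ0 : 0 ≤ θ := div_nonneg (sub_nonneg.2 has) hba.le
    have hθ1 : θ ≤ 1 := (div_le_one hba).2 (sub_le_sub_right hsb a)
    refine ⟨1 - θ, θ, by linarith, hθ0, by ring, ?_⟩
    have hkey : (1 - θ) * a + θ * b = s := by
      have hm : θ * (b - a) = s - a := div_mul_cancel₀ _ hba.ne'
      linear_combination hm
    calc (1 - θ) • (a • d + p) + θ • (b • d + p)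
        = ((1 - θ) * a + θ * b) • d + ((1 - θ) + θ) • p := by
          simp only [smul_add, smul_smul, add_smul]; abel
      _ = s • d + p := by rw [hkey]; norm_num

/-- If `x` lies in the convex hull of a collinear family of points indexed by a finset,
then it lies on a segment between two of them. -/
private lemma key_aux {n : ℕ} (v : Fin n → EuclideanSpace ℝ (Fin 2)) (s : Finset (Fin n))
    (hcol : Collinear ℝ (v '' ↑s)) {x : EuclideanSpace ℝ (Fin 2)}
    (hx : x ∈ convexHull ℝ (v '' ↑s)) :
    ∃ i j : Fin n, x ∈ segment ℝ (v i) (v j) := by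
  have hne : (v '' ↑s).Nonempty := convexHull_nonempty_iff.1 ⟨x, hx⟩
  obtain ⟨_, ⟨i₀, hi₀s, rfl⟩⟩ := hne
  obtain ⟨d, hd⟩ := (collinear_iff_of_mem (Set.mem_image_of_mem v hi₀s)).1 hcol
  have himg : v '' ↑s = Set.range (fun i : ↥(↑s : Set (Fin n)) => v ↑i) :=
    Set.image_eq_range _ _
  rw [himg, convexHull_range_eq_exists_affineCombination] at hx
  obtain ⟨t, w, hw0, hw1, hxw⟩ := hx
  have htne : t.Nonempty := by
    rcases Finset.eq_empty_or_nonempty t with rfl | h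
    · rw [Finset.sum_empty] at hw1
      exact absurd hw1 (by norm_num)
    · exact h
  choose r hr using fun i : ↥s => hd (v ↑i) ⟨↑i, i.2, rfl⟩
  have hxlin : x = ∑ i ∈ t, w i • v ↑i := by
    rw [← hxw, affineCombination_eq_linear_combination _ _ _ hw1]
  obtain ⟨i₁, hi₁, hmin⟩ := t.exists_min_image r htne
  obtain ⟨i₂, hi₂, hmax⟩ := t.exists_max_image r htne
  set S : ℝ := ∑ i ∈ t, w i * r i with hS
  have hxS : x = S • d + v i₀ := by
    rw [hxlin]
    have : ∀ i ∈ t, w i • v ↑i = (w i * r i) • d + w i • v i₀ := by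
      intro i hi
      rw [hr i]
      simp [vadd_eq_add, smul_add, smul_smul]
    rw [Finset.sum_congr rfl this, Finset.sum_add_distrib, ← Finset.sum_smul,
      ← Finset.sum_smul, hw1, one_smul]
  have hlow : r i₁ ≤ S := by
    calc r i₁ = ∑ i ∈ t, w i * r i₁ := by rw [← Finset.sum_mul, hw1, one_mul]
      _ ≤ S := Finset.sum_le_sum fun i hi =>
          mul_le_mul_of_nonneg_left (hmin i hi) (hw0 i hi)
  have hhigh : S ≤ r i₂ := by
    calc S ≤ ∑ i ∈ t, w i * r i₂ := Finset.sum_le_sum fun i hi =>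
          mul_le_mul_of_nonneg_left (hmax i hi) (hw0 i hi)
      _ = r i₂ := by rw [← Finset.sum_mul, hw1, one_mul]
  refine ⟨↑i₁, ↑i₂, ?_⟩
  have h1 : v (↑i₁ : Fin n) = r i₁ • d + v i₀ := hr i₁
  have h2 : v (↑i₂ : Fin n) = r i₂ • d + v i₀ := hr i₂
  rw [hxS, h1, h2]
  exact seg_aux _ _ hlow hhigh

/-- A set whose pairwise differences lie in a submodule of rank at most one is collinear. -/
private lemma collinear_aux (S : Set (EuclideanSpace ℝ (Fin 2)))
    (W : Submodule ℝ (EuclideanSpace ℝ (Fin 2))) (hW : finrank ℝ W ≤ 1)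
    (h : ∀ p ∈ S, ∀ q ∈ S, p - q ∈ W) : Collinear ℝ S := by
  rw [collinear_iff_rank_le_one]
  have hle : vectorSpan ℝ S ≤ W := by
    rw [vectorSpan_def]
    refine Submodule.span_le.2 ?_
    rintro _ ⟨p, hp, q, hq, rfl⟩
    exact h p hp q hq
  calc Module.rank ℝ (vectorSpan ℝ S) ≤ Module.rank ℝ W := Submodule.rank_mono hle
    _ = (finrank ℝ W : Cardinal) := (Module.finrank_eq_rank ℝ W).symm
    _ ≤ 1 := by exact_mod_cast hW

/-- In the plane, the frontier of the convex hull of finitely many points `v 0, …, v (n-1)`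
is contained in the union of the segments `[v i, v j]` over all pairs `(i, j)`. -/
theorem stmt12 (n : ℕ) (hn : 1 ≤ n) (v : Fin n → EuclideanSpace ℝ (Fin 2)) :
    frontier (convexHull ℝ (Set.range v)) ⊆
      ⋃ i : Fin n, ⋃ j : Fin n, segment ℝ (v i) (v j) := by
  intro x hx
  set C : Set (EuclideanSpace ℝ (Fin 2)) := convexHull ℝ (Set.range v) with hC
  have hconv : Convex ℝ C := convex_convexHull ℝ _
  have hcl : IsClosed C := ((Set.finite_range v).isCompact_convexHull ℝ).isClosed
  have hxC : x ∈ C := by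
    have := frontier_subset_closure hx
    rwa [hcl.closure_eq] at this
  have hfin2 : finrank ℝ (EuclideanSpace ℝ (Fin 2)) = 2 := finrank_euclideanSpace_fin
  simp only [Set.mem_iUnion]
  by_cases hint : (interior C).Nonempty
  · -- interior nonempty: supporting hyperplane
    have hxni : x ∉ interior C := hx.2
    obtain ⟨f, hf⟩ := geometric_hahn_banach_open_point hconv.interior isOpen_interior hxni
    obtain ⟨a, ha⟩ := hint
    -- f ≤ f x on all of C
    have hle : ∀ y ∈ C, f y ≤ f x := by
      intro y hy
      have hev : ∀ t : ℝ, t ∈ Set.Ioc (0:ℝ) 1 → f y + t * (f a - f y) < f x := by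
        intro t ht
        have hmem : y + t • (a - y) ∈ interior C :=
          hconv.add_smul_sub_mem_interior hy ha ht
        have := hf _ hmem
        simpa [map_add, map_smul, map_sub, smul_eq_mul, mul_sub] using this
      by_contra hcon
      push_neg at hcon
      have hfa : f a < f x := hf a ha
      set ε : ℝ := f y - f x with hε
      set D : ℝ := f y - f a with hD
      have hεpos : 0 < ε := sub_pos.2 hcon
      have hDpos : 0 < D := by
        have : f a < f y := hfa.trans hcon
        exact sub_pos.2 this
      set t : ℝ := min 1 (ε / (2 * D)) with htdef
      have htpos : 0 < t := lt_min one_pos (div_pos hεpos (by linarith))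
      have ht1 : t ≤ 1 := min_le_left _ _
      have hlt := hev t ⟨htpos, ht1⟩
      have htle : t ≤ ε / (2 * D) := min_le_right _ _
      have htD : t * D ≤ ε / 2 := by
        rw [le_div_iff₀ (by linarith : (0:ℝ) < 2 * D)] at htle
        nlinarith
      nlinarith [hlt]
    -- representation of x as convex combination
    have hxC' := hxC
    rw [hC, convexHull_range_eq_exists_affineCombination] at hxC'
    obtain ⟨t, w, hw0, hw1, hxw⟩ := hxC'
    have hxlin : x = ∑ i ∈ t, w i • v i := by
      rw [← hxw, affineCombination_eq_linear_combination _ _ _ hw1]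
    have hfx : f x = ∑ i ∈ t, w i * f (v i) := by
      rw [hxlin, map_sum]
      simp [smul_eq_mul]
    have hface : ∀ i ∈ t, w i ≠ 0 → f (v i) = f x := by
      intro i hi hwi
      by_contra hne
      have hvle : f (v i) ≤ f x :=
        hle _ (subset_convexHull ℝ _ (Set.mem_range_self i))
      have hlt : f (v i) < f x := lt_of_le_of_ne hvle hne
      have hwpos : 0 < w i := (hw0 i hi).lt_of_ne (Ne.symm hwi)
      have hsum : ∑ j ∈ t, w j * f (v j) < ∑ j ∈ t, w j * f x :=
        Finset.sum_lt_sum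
          (fun j hj => mul_le_mul_of_nonneg_left
            (hle _ (subset_convexHull ℝ _ (Set.mem_range_self j))) (hw0 j hj))
          ⟨i, hi, mul_lt_mul_of_pos_left hlt hwpos⟩
      rw [← Finset.sum_mul, hw1, one_mul, ← hfx] at hsum
      exact lt_irrefl _ hsum
    -- restrict to the support
    set t' : Finset (Fin n) := t.filter (fun i => w i ≠ 0) with ht'
    have hw1' : ∑ i ∈ t', w i = 1 := by
      rw [ht', Finset.sum_filter_ne_zero, hw1]
    have hxlin' : x = ∑ i ∈ t', w i • v i := by
      rw [hxlin, ht']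
      rw [Finset.sum_filter_of_ne]
      intro i hi hne
      intro hw
      apply hne
      rw [hw, zero_smul]
    have hxhull : x ∈ convexHull ℝ (v '' ↑t') := by
      have := t'.centerMass_mem_convexHull (w := w) (z := v)
        (fun i hi => hw0 i (Finset.mem_of_mem_filter i hi))
        (by rw [hw1']; exact one_pos)
        (fun i hi => Set.mem_image_of_mem v hi)
      rwa [Finset.centerMass_eq_of_sum_1 _ _ hw1', ← hxlin'] at this
    -- the support is collinear (it lies in the supporting line)
    have hker : finrank ℝ (LinearMap.ker f.toLinearMap) ≤ 1 := by
      have hne : LinearMap.ker f.toLinearMap ≠ ⊤ := by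
        intro h
        have : f (a - x) = 0 := by
          have : a - x ∈ LinearMap.ker f.toLinearMap := h ▸ Submodule.mem_top
          exact this
        rw [map_sub, sub_eq_zero] at this
        exact absurd this (ne_of_lt (hf a ha))
      have := Submodule.finrank_lt (V := EuclideanSpace ℝ (Fin 2))
        hne
      omega
    have hcol : Collinear ℝ (v '' ↑t') := by
      refine collinear_aux _ (LinearMap.ker f.toLinearMap) hker ?_
      rintro _ ⟨i, hi, rfl⟩ _ ⟨j, hj, rfl⟩
      have hfi : f (v i) = f x := hface i (Finset.mem_of_mem_filter i hi)
        (Finset.mem_filter.1 hi).2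
      have hfj : f (v j) = f x := hface j (Finset.mem_of_mem_filter j hj)
        (Finset.mem_filter.1 hj).2
      simp [LinearMap.mem_ker, map_sub, hfi, hfj]
    exact key_aux v t' hcol hxhull
  · -- interior empty: everything is collinear
    have : Nonempty (Fin n) := ⟨⟨0, hn⟩⟩
    have hrange_ne : (Set.range v).Nonempty := Set.range_nonempty _
    have hspan : affineSpan ℝ (Set.range v) ≠ ⊤ := by
      intro h
      apply hint
      rw [hconv.interior_nonempty_iff_affineSpan_eq_top, hC, affineSpan_convexHull]
      exact h
    have hdir : vectorSpan ℝ (Set.range v) ≠ ⊤ := by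
      intro h
      apply hspan
      rw [← AffineSubspace.direction_eq_top_iff_of_nonempty
        ((affineSpan_nonempty ℝ).2 hrange_ne), direction_affineSpan]
      exact h
    have hfr : finrank ℝ (vectorSpan ℝ (Set.range v)) ≤ 1 := by
      have := Submodule.finrank_lt (V := EuclideanSpace ℝ (Fin 2))
        hdir
      omega
    have hcol : Collinear ℝ (Set.range v) := by
      rw [collinear_iff_rank_le_one]
      calc Module.rank ℝ (vectorSpan ℝ (Set.range v))
          = (finrank ℝ (vectorSpan ℝ (Set.range v)) : Cardinal) :=
            (Module.finrank_eq_rank ℝ _).symm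
        _ ≤ 1 := by exact_mod_cast hfr
    have himg : v '' ↑(Finset.univ : Finset (Fin n)) = Set.range v := by
      simp
    exact key_aux v Finset.univ (himg ▸ hcol) (himg ▸ hxC)
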